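/- Let L_1(x) = I_{H_1} + Σ_{j=1}^g A_j x_j and L_2(x) = I_{H_2} + Σ_{j=1}^g B_j x_j be monic linear operator pencils with bounded self-adjoint coefficients on separable real Hilbert spaces H_1, H_2. Then D_{ʰL_1}(n) = D_{ʰL_2}(n) for all n ∈ ℕ if and only if for every n ∈ ℕ and all real n×n matrices Y, X_1, …, X_g (not necessarily symmetric), the operator norm of the bounded operator on H_1^n with (i,k) block Y_{ik} I_{H_1} + Σ_{j=1}^g (X_j)_{ik} A_j equals the operator norm of the bounded operator on H_2^n with (i,k) block Y_{ik} I_{H_2} + Σ_{j=1}^g (X_j)_{ik} B_j (i.e. the unital map A_j ↦ B_j is well defined and completely isometric). -/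

import Mathlib

open scoped RealInnerProductSpace

noncomputable section

variable {E H K : Type*}

/-- A bounded operator on a real inner product space is symmetric (self-adjoint). -/
def OpIsSymm [NormedAddCommGroup E] [InnerProductSpace ℝ E] (T : E →L[ℝ] E) : Prop :=
  ∀ u v : E, ⟪T u, v⟫ = ⟪u, T v⟫

/-- A bounded operator on a real inner product space is positive semidefinite. -/
def OpIsPos [NormedAddCommGroup E] [InnerProductSpace ℝ E] (T : E →L[ℝ] E) : Prop :=
  OpIsSymm T ∧ ∀ v : E, 0 ≤ ⟪T v, v⟫

/-- A bounded operator is positive definite: `T - ε • id` is positive semidefinite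
for some `ε > 0`. -/
def OpIsPosDef [NormedAddCommGroup E] [InnerProductSpace ℝ E] (T : E →L[ℝ] E) : Prop :=
  ∃ ε : ℝ, 0 < ε ∧ OpIsPos (T - ε • ContinuousLinearMap.id ℝ E)

/-- The block operator on the Hilbert direct sum `H^n` whose `(i,k)` block is `c i k`. -/
def blockOp [NormedAddCommGroup H] [InnerProductSpace ℝ H] {n : ℕ}
    (c : Fin n → Fin n → (H →L[ℝ] H)) :
    (PiLp 2 fun _ : Fin n => H) →L[ℝ] (PiLp 2 fun _ : Fin n => H) :=
  (((PiLp.continuousLinearEquiv 2 ℝ (fun _ : Fin n => H)).symm.toContinuousLinearMap.comp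
    (ContinuousLinearMap.pi fun i : Fin n =>
      ∑ k : Fin n, (c i k).comp (ContinuousLinearMap.proj k))).comp
    (PiLp.continuousLinearEquiv 2 ℝ (fun _ : Fin n => H)).toContinuousLinearMap)

/-- Evaluation of the homogeneous linear pencil `I_H x₀ + Σ_j A_j x_j` at a tuple of
`n × n` matrices: the operator on `H^n` with `(i,k)` block
`(X₀)_{ik} I_H + Σ_j (X_j)_{ik} A_j`. -/
def hEval [NormedAddCommGroup H] [InnerProductSpace ℝ H] {g n : ℕ}
    (A : Fin g → (H →L[ℝ] H)) (X0 : Matrix (Fin n) (Fin n) ℝ)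
    (X : Fin g → Matrix (Fin n) (Fin n) ℝ) :
    (PiLp 2 fun _ : Fin n => H) →L[ℝ] (PiLp 2 fun _ : Fin n => H) :=
  blockOp fun i k => X0 i k • (1 : H →L[ℝ] H) + ∑ j, X j i k • A j

/-- Evaluation of the monic linear pencil `I_H + Σ_j A_j x_j` at a tuple of
`n × n` matrices. -/
def monicEval [NormedAddCommGroup H] [InnerProductSpace ℝ H] {g n : ℕ}
    (A : Fin g → (H →L[ℝ] H)) (X : Fin g → Matrix (Fin n) (Fin n) ℝ) :
    (PiLp 2 fun _ : Fin n => H) →L[ℝ] (PiLp 2 fun _ : Fin n => H) :=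
  hEval A 1 X

/-- Positivity of the evaluation `L(X) = A₀ ⊗ I_K + Σ_j A_j ⊗ X_j` of a linear operator
pencil at a tuple of bounded operators on a Hilbert space `K`. -/
def operPencilPos [NormedAddCommGroup H] [InnerProductSpace ℝ H]
    [NormedAddCommGroup K] [InnerProductSpace ℝ K] {g : ℕ}
    (A0 : H →L[ℝ] H) (A : Fin g → (H →L[ℝ] H)) (X : Fin g → (K →L[ℝ] K)) : Prop :=
  ∀ (m : ℕ) (h : Fin m → H) (u : Fin m → K),
    0 ≤ ∑ i, ∑ l,
      (⟪A0 (h i), h l⟫ * ⟪u i, u l⟫ + ∑ j, ⟪A j (h i), h l⟫ * ⟪X j (u i), u l⟫)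

/-- A bundled separable real Hilbert space. -/
structure SepHilbert where
  carrier : Type
  [nacg : NormedAddCommGroup carrier]
  [ips : InnerProductSpace ℝ carrier]
  [cs : CompleteSpace carrier]
  [sep : TopologicalSpace.SeparableSpace carrier]

attribute [instance] SepHilbert.nacg SepHilbert.ips SepHilbert.cs SepHilbert.sep


section aux
variable {H : Type*} [NormedAddCommGroup H] [InnerProductSpace ℝ H]

lemma blockOp_apply {n : ℕ} (c : Fin n → Fin n → (H →L[ℝ] H))
    (v : PiLp 2 fun _ : Fin n => H) (i : Fin n) :
    blockOp c v i = ∑ k, c i k (v k) := by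
  simp [blockOp, ContinuousLinearMap.proj]

lemma inner_blockOp {n : ℕ} (c : Fin n → Fin n → (H →L[ℝ] H))
    (v w : PiLp 2 fun _ : Fin n => H) :
    ⟪blockOp c v, w⟫ = ∑ i, ∑ k, ⟪c i k (v k), w i⟫ := by
  rw [PiLp.inner_apply]
  refine Finset.sum_congr rfl fun i _ => ?_
  rw [blockOp_apply]
  exact sum_inner (𝕜 := ℝ) _ _ _
lemma inner_hEval {g n : ℕ} (A : Fin g → (H →L[ℝ] H))
    (X0 : Matrix (Fin n) (Fin n) ℝ) (X : Fin g → Matrix (Fin n) (Fin n) ℝ)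
    (v w : PiLp 2 fun _ : Fin n => H) :
    ⟪hEval A X0 X v, w⟫ =
      ∑ i, ∑ k, (X0 i k * ⟪v k, w i⟫ + ∑ j, X j i k * ⟪A j (v k), w i⟫) := by
  rw [hEval, inner_blockOp]
  refine Finset.sum_congr rfl fun i _ => Finset.sum_congr rfl fun k _ => ?_
  simp [ContinuousLinearMap.add_apply, ContinuousLinearMap.sum_apply,
    ContinuousLinearMap.smul_apply, inner_add_left, real_inner_smul_left,
    sum_inner (𝕜 := ℝ)]
lemma hEval_symm {g n : ℕ} {A : Fin g → (H →L[ℝ] H)} (hA : ∀ j, OpIsSymm (A j))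
    {X0 : Matrix (Fin n) (Fin n) ℝ} {X : Fin g → Matrix (Fin n) (Fin n) ℝ}
    (hX0 : X0.IsSymm) (hX : ∀ j, (X j).IsSymm) :
    OpIsSymm (hEval A X0 X) := by
  intro v w
  rw [real_inner_comm (hEval A X0 X w) v, inner_hEval, inner_hEval, Finset.sum_comm]
  refine Finset.sum_congr rfl fun i _ => Finset.sum_congr rfl fun k _ => ?_
  congr 1
  · rw [hX0.apply i k, real_inner_comm]
  · refine Finset.sum_congr rfl fun j _ => ?_
    rw [(hX j).apply i k, hA j (v i) (w k), real_inner_comm]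

lemma norm_le_of_qform {c : ℝ} {T : H →L[ℝ] H} (hT : OpIsSymm T) (hc : 0 ≤ c)
    (hq : ∀ v : H, |⟪T v, v⟫| ≤ c * ‖v‖ ^ 2) : ‖T‖ ≤ c := by
  refine ContinuousLinearMap.opNorm_le_bound T hc fun v => ?_
  rcases eq_or_ne (T v) 0 with h0 | h0
  · simp [h0, mul_nonneg hc (norm_nonneg v)]
  have key : ∀ u w : H, 4 * ⟪T u, w⟫ ≤ 2 * c * (‖u‖ ^ 2 + ‖w‖ ^ 2) := by
    intro u w
    have e1 : ⟪T (u + w), u + w⟫ - ⟪T (u - w), u - w⟫ = 4 * ⟪T u, w⟫ := by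
      have hsw : ⟪T w, u⟫ = ⟪T u, w⟫ := by
        rw [hT w u, real_inner_comm]
      simp only [map_add, map_sub, inner_add_left, inner_add_right,
        inner_sub_left, inner_sub_right]
      rw [← hsw]; ring
    have h2 : ⟪T (u + w), u + w⟫ ≤ c * ‖u + w‖ ^ 2 := (abs_le.1 (hq (u + w))).2
    have h3 : -(c * ‖u - w‖ ^ 2) ≤ ⟪T (u - w), u - w⟫ := (abs_le.1 (hq (u - w))).1
    have h4 : ‖u + w‖ ^ 2 + ‖u - w‖ ^ 2 = 2 * (‖u‖ ^ 2 + ‖w‖ ^ 2) := by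
      have := parallelogram_law_with_norm ℝ u w
      nlinarith [this]
    nlinarith [e1, h2, h3, h4]
  have hvn : 0 < ‖T v‖ := norm_pos_iff.2 h0
  have hv0 : v ≠ 0 := fun h => h0 (by simp [h])
  have hvp : 0 < ‖v‖ := norm_pos_iff.2 hv0
  have hu : ⟪T v, (‖v‖ / ‖T v‖) • T v⟫ = ‖v‖ * ‖T v‖ := by
    rw [real_inner_smul_right, real_inner_self_eq_norm_sq]
    field_simp
  have hnu : ‖(‖v‖ / ‖T v‖) • T v‖ = ‖v‖ := by
    rw [norm_smul, Real.norm_eq_abs, abs_of_nonneg (by positivity)]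
    field_simp
  have := key v ((‖v‖ / ‖T v‖) • T v)
  rw [hu, hnu] at this
  nlinarith [this, hvp, hvn]

lemma norm_le_iff_bilin {c : ℝ} (T : H →L[ℝ] H) (hc : 0 ≤ c) :
    ‖T‖ ≤ c ↔ ∀ u w : H, 2 * ⟪T w, u⟫ ≤ c * (‖u‖ ^ 2 + ‖w‖ ^ 2) := by
  constructor
  · intro h u w
    have h1 : ⟪T w, u⟫ ≤ ‖T w‖ * ‖u‖ := real_inner_le_norm _ _
    have h2 : ‖T w‖ ≤ c * ‖w‖ := T.le_opNorm w |>.trans (by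
      have := mul_le_mul_of_nonneg_right h (norm_nonneg w)
      linarith)
    nlinarith [sq_nonneg (‖u‖ - ‖w‖), norm_nonneg u, norm_nonneg w,
      mul_le_mul_of_nonneg_right h2 (norm_nonneg u)]
  · intro h
    refine ContinuousLinearMap.opNorm_le_bound T hc fun w => ?_
    rcases eq_or_ne (T w) 0 with h0 | h0
    · simp [h0, mul_nonneg hc (norm_nonneg w)]
    have hvn : 0 < ‖T w‖ := norm_pos_iff.2 h0
    have hw0 : w ≠ 0 := fun h' => h0 (by simp [h'])
    have hwp : 0 < ‖w‖ := norm_pos_iff.2 hw0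
    have hu : ⟪T w, (‖w‖ / ‖T w‖) • T w⟫ = ‖w‖ * ‖T w‖ := by
      rw [real_inner_smul_right, real_inner_self_eq_norm_sq]
      field_simp
    have hnu : ‖(‖w‖ / ‖T w‖) • T w‖ = ‖w‖ := by
      rw [norm_smul, Real.norm_eq_abs, abs_of_nonneg (by positivity)]
      field_simp
    have := h ((‖w‖ / ‖T w‖) • T w) w
    rw [hu, hnu] at this
    nlinarith [this, hwp, hvn]
lemma inner_hEval_shift {g n : ℕ} (A : Fin g → (H →L[ℝ] H))
    (X0 : Matrix (Fin n) (Fin n) ℝ) (X : Fin g → Matrix (Fin n) (Fin n) ℝ) (c : ℝ)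
    (v : PiLp 2 fun _ : Fin n => H) :
    ⟪hEval A (c • (1 : Matrix (Fin n) (Fin n) ℝ) - X0) (fun j => -X j) v, v⟫
      = c * ‖v‖ ^ 2 - ⟪hEval A X0 X v, v⟫ := by
  rw [inner_hEval, inner_hEval, PiLp.norm_sq_eq_of_L2]
  have step : ∀ i k : Fin n,
      ((c • (1 : Matrix (Fin n) (Fin n) ℝ) - X0) i k * ⟪v k, v i⟫
        + ∑ j, (-X j) i k * ⟪A j (v k), v i⟫)
      = (if k = i then c * ⟪v k, v i⟫ else 0)
        - (X0 i k * ⟪v k, v i⟫ + ∑ j, X j i k * ⟪A j (v k), v i⟫) := by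
    intro i k
    by_cases h : k = i
    · subst h
      simp [Matrix.one_apply, Finset.sum_neg_distrib]
      ring
    · have h' : ¬ i = k := fun hh => h hh.symm
      simp [Matrix.one_apply, h, h', Finset.sum_neg_distrib]
      ring
  simp only [step]
  have hsplit : (∑ i, ∑ k, ((if k = i then c * ⟪v k, v i⟫ else 0)
      - (X0 i k * ⟪v k, v i⟫ + ∑ j, X j i k * ⟪A j (v k), v i⟫)))
      = (∑ i, ∑ k, (if k = i then c * ⟪v k, v i⟫ else 0))
        - ∑ i, ∑ k, (X0 i k * ⟪v k, v i⟫ + ∑ j, X j i k * ⟪A j (v k), v i⟫) := by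
    rw [← Finset.sum_sub_distrib]
    exact Finset.sum_congr rfl fun i _ => Finset.sum_sub_distrib _ _
  rw [hsplit]
  congr 1
  rw [Finset.mul_sum]
  refine Finset.sum_congr rfl fun i _ => ?_
  rw [Finset.sum_ite_eq' Finset.univ i (fun k => c * ⟪v k, v i⟫)]
  simp [real_inner_self_eq_norm_sq]

lemma pos_transfer {K : Type*} [NormedAddCommGroup K] [InnerProductSpace ℝ K]
    {g n : ℕ} {A : Fin g → (H →L[ℝ] H)} {B : Fin g → (K →L[ℝ] K)}
    (hA : ∀ j, OpIsSymm (A j)) (hB : ∀ j, OpIsSymm (B j))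
    (hnorm : ∀ (Y : Matrix (Fin n) (Fin n) ℝ) (X' : Fin g → Matrix (Fin n) (Fin n) ℝ),
      ‖hEval A Y X'‖ = ‖hEval B Y X'‖)
    {X0 : Matrix (Fin n) (Fin n) ℝ} {X : Fin g → Matrix (Fin n) (Fin n) ℝ}
    (hX0 : X0.IsSymm) (hX : ∀ j, (X j).IsSymm)
    (hpos : OpIsPos (hEval A X0 X)) : OpIsPos (hEval B X0 X) := by
  obtain ⟨hsymm, hq⟩ := hpos
  set c : ℝ := ‖hEval A X0 X‖ with hcdef
  have hc : 0 ≤ c := by rw [hcdef]; exact norm_nonneg (hEval A X0 X)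
  have hX0s : (c • (1 : Matrix (Fin n) (Fin n) ℝ) - X0).IsSymm := by
    rw [Matrix.IsSymm, Matrix.transpose_sub, Matrix.transpose_smul,
      Matrix.transpose_one, hX0.eq]
  have hXs : ∀ j, (-X j).IsSymm := fun j => by
    rw [Matrix.IsSymm, Matrix.transpose_neg, (hX j).eq]
  have hshiftA : ‖hEval A (c • (1 : Matrix (Fin n) (Fin n) ℝ) - X0) (fun j => -X j)‖ ≤ c := by
    refine norm_le_of_qform (hEval_symm hA hX0s hXs) hc fun v => ?_
    rw [inner_hEval_shift A X0 X c v]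
    have h1 : 0 ≤ ⟪hEval A X0 X v, v⟫ := hq v
    have h2 : ⟪hEval A X0 X v, v⟫ ≤ c * ‖v‖ ^ 2 := by
      have := real_inner_le_norm (hEval A X0 X v) v
      have h3 := (hEval A X0 X).le_opNorm v
      nlinarith [norm_nonneg v, norm_nonneg (hEval A X0 X v)]
    rw [abs_le]
    constructor <;> nlinarith [sq_nonneg ‖v‖]
  have hshiftB : ‖hEval B (c • (1 : Matrix (Fin n) (Fin n) ℝ) - X0) (fun j => -X j)‖ ≤ c := by
    rw [← hnorm]; exact hshiftA
  have hcB : ‖hEval B X0 X‖ = c := (hnorm X0 X).symm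
  refine ⟨hEval_symm hB hX0 hX, fun v => ?_⟩
  have hkey := inner_hEval_shift B X0 X c v
  have hb : ⟪hEval B (c • (1 : Matrix (Fin n) (Fin n) ℝ) - X0) (fun j => -X j) v, v⟫
      ≤ c * ‖v‖ ^ 2 := by
    have h1 := real_inner_le_norm
      (hEval B (c • (1 : Matrix (Fin n) (Fin n) ℝ) - X0) (fun j => -X j) v) v
    have h2 := (hEval B (c • (1 : Matrix (Fin n) (Fin n) ℝ) - X0) (fun j => -X j)).le_opNorm v
    nlinarith [norm_nonneg v,
      norm_nonneg (hEval B (c • (1 : Matrix (Fin n) (Fin n) ℝ) - X0) (fun j => -X j) v),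
      mul_le_mul_of_nonneg_right hshiftB (norm_nonneg v)]
  linarith [hkey ▸ hb]
/-- The symmetric block matrix `[[c 1, Y], [Yt, c 1]]`. -/
def blkY {n : ℕ} (c : ℝ) (Y : Matrix (Fin n) (Fin n) ℝ) :
    Matrix (Fin (n + n)) (Fin (n + n)) ℝ :=
  (Matrix.fromBlocks (c • 1) Y Y.transpose (c • 1)).submatrix
    finSumFinEquiv.symm finSumFinEquiv.symm

/-- The symmetric block matrix `[[0, X], [Xt, 0]]`. -/
def blkX {n : ℕ} (X : Matrix (Fin n) (Fin n) ℝ) :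
    Matrix (Fin (n + n)) (Fin (n + n)) ℝ :=
  (Matrix.fromBlocks 0 X X.transpose 0).submatrix finSumFinEquiv.symm finSumFinEquiv.symm

lemma blkY_isSymm {n : ℕ} (c : ℝ) (Y : Matrix (Fin n) (Fin n) ℝ) : (blkY c Y).IsSymm := by
  unfold blkY
  exact (Matrix.IsSymm.fromBlocks
    (by rw [Matrix.IsSymm, Matrix.transpose_smul, Matrix.transpose_one]) rfl
    (by rw [Matrix.IsSymm, Matrix.transpose_smul, Matrix.transpose_one])).submatrix _

lemma blkX_isSymm {n : ℕ} (X : Matrix (Fin n) (Fin n) ℝ) : (blkX X).IsSymm := by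
  unfold blkX
  exact (Matrix.IsSymm.fromBlocks Matrix.isSymm_zero rfl Matrix.isSymm_zero).submatrix _

/-- Left restriction. -/
def restL {n : ℕ} (v : PiLp 2 fun _ : Fin (n + n) => H) : PiLp 2 fun _ : Fin n => H :=
  (WithLp.equiv 2 _).symm fun i => v (finSumFinEquiv (Sum.inl i))

/-- Right restriction. -/
def restR {n : ℕ} (v : PiLp 2 fun _ : Fin (n + n) => H) : PiLp 2 fun _ : Fin n => H :=
  (WithLp.equiv 2 _).symm fun i => v (finSumFinEquiv (Sum.inr i))

lemma restL_apply {n : ℕ} (v : PiLp 2 fun _ : Fin (n + n) => H) (i : Fin n) :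
    restL v i = v (finSumFinEquiv (Sum.inl i)) := rfl

lemma restR_apply {n : ℕ} (v : PiLp 2 fun _ : Fin (n + n) => H) (i : Fin n) :
    restR v i = v (finSumFinEquiv (Sum.inr i)) := rfl

lemma inner_hEval_blk {g n : ℕ} (A : Fin g → (H →L[ℝ] H)) (hA : ∀ j, OpIsSymm (A j))
    (Y : Matrix (Fin n) (Fin n) ℝ) (X : Fin g → Matrix (Fin n) (Fin n) ℝ) (c : ℝ)
    (v : PiLp 2 fun _ : Fin (n + n) => H) :
    ⟪hEval A (blkY c Y) (fun j => blkX (X j)) v, v⟫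
      = c * ‖restL v‖ ^ 2 + c * ‖restR v‖ ^ 2
        + 2 * ⟪hEval A Y X (restR v) , restL v⟫ := by
  rw [inner_hEval]
  have reidx : ∀ f : Fin (n + n) → ℝ,
      ∑ i, f i = ∑ p : Fin n ⊕ Fin n, f (finSumFinEquiv p) :=
    fun f => (Equiv.sum_comp finSumFinEquiv f).symm
  rw [reidx]
  have inner_reidx : ∀ p : Fin n ⊕ Fin n,
      (∑ k, ((blkY c Y) (finSumFinEquiv p) k * ⟪v k, v (finSumFinEquiv p)⟫
        + ∑ j, (blkX (X j)) (finSumFinEquiv p) k * ⟪A j (v k), v (finSumFinEquiv p)⟫))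
      = ∑ q : Fin n ⊕ Fin n,
          ((blkY c Y) (finSumFinEquiv p) (finSumFinEquiv q)
              * ⟪v (finSumFinEquiv q), v (finSumFinEquiv p)⟫
            + ∑ j, (blkX (X j)) (finSumFinEquiv p) (finSumFinEquiv q)
              * ⟪A j (v (finSumFinEquiv q)), v (finSumFinEquiv p)⟫) :=
    fun p => reidx _
  simp only [inner_reidx, Fintype.sum_sum_type]
  simp only [blkY, blkX, Matrix.submatrix_apply, Equiv.symm_apply_apply,
    Matrix.fromBlocks_apply₁₁, Matrix.fromBlocks_apply₁₂, Matrix.fromBlocks_apply₂₁,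
    Matrix.fromBlocks_apply₂₂, Matrix.zero_apply, zero_mul, Finset.sum_const_zero,
    add_zero, zero_add, Matrix.transpose_apply, Matrix.smul_apply, Matrix.one_apply,
    smul_eq_mul]
  simp only [← restL_apply, ← restR_apply]
  rw [Finset.sum_add_distrib, Finset.sum_add_distrib]
  have hdiag : ∀ z : PiLp 2 fun _ : Fin n => H,
      (∑ x : Fin n, ∑ x1 : Fin n, (c * if x = x1 then 1 else 0) * ⟪z x1, z x⟫)
        = c * ‖z‖ ^ 2 := by
    intro z
    rw [PiLp.norm_sq_eq_of_L2, Finset.mul_sum]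
    refine Finset.sum_congr rfl fun x _ => ?_
    rw [Finset.sum_congr rfl (fun x1 _ => by
      rw [mul_ite, mul_one, mul_zero, ite_mul, zero_mul])]
    rw [Finset.sum_ite_eq Finset.univ x (fun x1 => c * ⟪z x1, z x⟫)]
    simp [real_inner_self_eq_norm_sq]
  have h12 : (∑ x : Fin n, ∑ x1 : Fin n,
      (Y x x1 * ⟪restR v x1, restL v x⟫
        + ∑ j, X j x x1 * ⟪A j (restR v x1), restL v x⟫))
      = ⟪hEval A Y X (restR v), restL v⟫ := (inner_hEval A Y X _ _).symm
  have h21 : (∑ x : Fin n, ∑ x1 : Fin n,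
      (Y x1 x * ⟪restL v x1, restR v x⟫
        + ∑ j, X j x1 x * ⟪A j (restL v x1), restR v x⟫))
      = ⟪hEval A Y X (restR v), restL v⟫ := by
    rw [Finset.sum_comm, inner_hEval]
    refine Finset.sum_congr rfl fun a _ => Finset.sum_congr rfl fun b _ => ?_
    congr 1
    · rw [real_inner_comm]
    · refine Finset.sum_congr rfl fun j _ => ?_
      rw [hA j (restL v a) (restR v b), real_inner_comm]
  rw [hdiag (restL v), hdiag (restR v), h12, h21]
  ring
lemma restL_elim {n : ℕ} (u w : PiLp 2 fun _ : Fin n => H) :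
    restL ((WithLp.equiv 2 _).symm
      fun i => Sum.elim u w (finSumFinEquiv.symm i)) = u := by
  refine PiLp.ext fun i => ?_
  show Sum.elim u w (finSumFinEquiv.symm (finSumFinEquiv (Sum.inl i))) = u i
  rw [Equiv.symm_apply_apply]; rfl

lemma restR_elim {n : ℕ} (u w : PiLp 2 fun _ : Fin n => H) :
    restR ((WithLp.equiv 2 _).symm
      fun i => Sum.elim u w (finSumFinEquiv.symm i)) = w := by
  refine PiLp.ext fun i => ?_
  show Sum.elim u w (finSumFinEquiv.symm (finSumFinEquiv (Sum.inr i))) = w i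
  rw [Equiv.symm_apply_apply]; rfl

lemma block_pos_iff {g n : ℕ} {A : Fin g → (H →L[ℝ] H)} (hA : ∀ j, OpIsSymm (A j))
    (Y : Matrix (Fin n) (Fin n) ℝ) (X : Fin g → Matrix (Fin n) (Fin n) ℝ)
    {c : ℝ} (hc : 0 ≤ c) :
    OpIsPos (hEval A (blkY c Y) fun j => blkX (X j)) ↔ ‖hEval A Y X‖ ≤ c := by
  constructor
  · rintro ⟨-, hq⟩
    rw [norm_le_iff_bilin _ hc]
    intro u w
    have h := hq ((WithLp.equiv 2 _).symm
      fun i => Sum.elim (-u) w (finSumFinEquiv.symm i))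
    rw [inner_hEval_blk A hA Y X c, restL_elim, restR_elim, norm_neg,
      inner_neg_right] at h
    linarith
  · intro hnorm
    refine ⟨hEval_symm hA (blkY_isSymm c Y) (fun j => blkX_isSymm (X j)), fun v => ?_⟩
    rw [inner_hEval_blk A hA Y X c]
    have h := (norm_le_iff_bilin (hEval A Y X) hc).1 hnorm (-(restL v)) (restR v)
    rw [norm_neg, inner_neg_right] at h
    linarith

end aux

/-- the homogenized free spectrahedra of two monic pencils coincide at
all levels iff the unital map `A_j ↦ B_j` is (well defined and) completely isometric,
i.e. preserves the operator norms of all block operators. -/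
theorem homogeneous_equality_iff_completely_isometric
    {g : ℕ} {H1 H2 : Type}
    [NormedAddCommGroup H1] [InnerProductSpace ℝ H1] [CompleteSpace H1]
    [TopologicalSpace.SeparableSpace H1]
    [NormedAddCommGroup H2] [InnerProductSpace ℝ H2] [CompleteSpace H2]
    [TopologicalSpace.SeparableSpace H2]
    (A : Fin g → (H1 →L[ℝ] H1)) (B : Fin g → (H2 →L[ℝ] H2))
    (hA : ∀ j, OpIsSymm (A j)) (hB : ∀ j, OpIsSymm (B j)) :
    (∀ (n : ℕ) (X0 : Matrix (Fin n) (Fin n) ℝ) (X : Fin g → Matrix (Fin n) (Fin n) ℝ),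
        X0.IsSymm → (∀ j, (X j).IsSymm) →
        (OpIsPos (hEval A X0 X) ↔ OpIsPos (hEval B X0 X))) ↔
    (∀ (n : ℕ) (Y : Matrix (Fin n) (Fin n) ℝ) (X : Fin g → Matrix (Fin n) (Fin n) ℝ),
        ‖hEval A Y X‖ = ‖hEval B Y X‖) := by
  constructor
  · intro hpos n Y X
    have key : ∀ c : ℝ, 0 ≤ c → (‖hEval A Y X‖ ≤ c ↔ ‖hEval B Y X‖ ≤ c) := by
      intro c hc
      rw [← block_pos_iff hA Y X hc, ← block_pos_iff hB Y X hc]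
      exact hpos (n + n) (blkY c Y) (fun j => blkX (X j)) (blkY_isSymm c Y)
        (fun j => blkX_isSymm (X j))
    have h1 := (key ‖hEval B Y X‖ (norm_nonneg (hEval B Y X))).2 le_rfl
    have h2 := (key ‖hEval A Y X‖ (norm_nonneg (hEval A Y X))).1 le_rfl
    exact le_antisymm h1 h2
  · intro hnorm n X0 X hX0 hX
    exact ⟨pos_transfer hA hB (hnorm n) hX0 hX,
      pos_transfer hB hA (fun Y X' => (hnorm n Y X').symm) hX0 hX⟩
end
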